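/- Let G be a finite simple graph and A a critical independent set of G. If there is no nonempty set B ⊆ N(A) with |N(B) ∩ A| = |B|, then for each v ∈ A there exists a matching from N(A) into A \ {v}; conversely, if for each v ∈ A such a matching exists, then there is no nonempty B ⊆ N(A) with |N(B) ∩ A| = |B|. -/

import Mathlib

open Finset

namespace CritGraph

variable {V : Type*} [Fintype V] [DecidableEq V]

/-- The neighborhood of a set of vertices `X`:
all vertices having at least one neighbor in `X`. -/
def nbhd (G : SimpleGraph V) [DecidableRel G.Adj] (X : Finset V) : Finset V :=
  univ.filter fun v => ∃ x ∈ X, G.Adj v x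

/-- The difference `d(X) = |X| - |N(X)|` of a set of vertices `X`. -/
def diff (G : SimpleGraph V) [DecidableRel G.Adj] (X : Finset V) : ℤ :=
  (X.card : ℤ) - ((nbhd G X).card : ℤ)

/-- A set of vertices is independent if no two of its vertices are adjacent. -/
def IsIndep (G : SimpleGraph V) (S : Finset V) : Prop :=
  ∀ u ∈ S, ∀ v ∈ S, ¬ G.Adj u v

instance (G : SimpleGraph V) [DecidableRel G.Adj] : DecidablePred (IsIndep G) := fun S =>
  inferInstanceAs (Decidable (∀ u ∈ S, ∀ v ∈ S, ¬ G.Adj u v))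

/-- The critical difference `d_c(G) = max {d(X) : X ⊆ V}`. -/
def dC (G : SimpleGraph V) [DecidableRel G.Adj] : ℤ :=
  (univ : Finset V).powerset.sup' (Finset.powerset_nonempty _) (diff G)

/-- The critical independence difference `id_c(G) = max {d(I) : I independent}`. -/
def idC (G : SimpleGraph V) [DecidableRel G.Adj] : ℤ :=
  ((univ : Finset V).powerset.filter (IsIndep G)).sup'
    ⟨∅, by simp [IsIndep]⟩ (diff G)

/-- `A` is a critical independent set: `A` is independent and
`d(A) = max {d(I) : I independent}`. -/
def IsCritIndep (G : SimpleGraph V) [DecidableRel G.Adj] (A : Finset V) : Prop :=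
  IsIndep G A ∧ ∀ I : Finset V, IsIndep G I → diff G I ≤ diff G A

instance (G : SimpleGraph V) [DecidableRel G.Adj] : DecidablePred (IsCritIndep G) := fun A =>
  inferInstanceAs (Decidable (IsIndep G A ∧ ∀ I : Finset V, IsIndep G I → diff G I ≤ diff G A))

/-- `ker(G)`: the intersection of all critical independent sets of `G`. -/
def kerG (G : SimpleGraph V) [DecidableRel G.Adj] : Finset V :=
  univ.filter fun v => ∀ A : Finset V, IsCritIndep G A → v ∈ A

/-- `G - v`: the induced subgraph of `G` on `V \ {v}`. -/
def deleteVert (G : SimpleGraph V) (v : V) : SimpleGraph {u : V // u ≠ v} :=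
  G.comap Subtype.val

instance (G : SimpleGraph V) (v : V) [DecidableRel G.Adj] :
    DecidableRel (deleteVert G v).Adj := fun a b =>
  inferInstanceAs (Decidable (G.Adj a.val b.val))

/-- `S` is an inclusion-minimal independent set with positive difference. -/
def MinPosIndep (G : SimpleGraph V) [DecidableRel G.Adj] (S : Finset V) : Prop :=
  IsIndep G S ∧ 0 < diff G S ∧ ∀ S' ⊂ S, ¬ (IsIndep G S' ∧ 0 < diff G S')

/-- `S` is a maximum independent set. -/
def IsMaxIndep (G : SimpleGraph V) (S : Finset V) : Prop :=
  IsIndep G S ∧ ∀ I : Finset V, IsIndep G I → I.card ≤ S.card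

instance (G : SimpleGraph V) [DecidableRel G.Adj] : DecidablePred (IsMaxIndep G) := fun S =>
  inferInstanceAs (Decidable (IsIndep G S ∧ ∀ I : Finset V, IsIndep G I → I.card ≤ S.card))

/-- `core(G)`: the intersection of all maximum independent sets of `G`. -/
def coreG (G : SimpleGraph V) [DecidableRel G.Adj] : Finset V :=
  univ.filter fun v => ∀ A : Finset V, IsMaxIndep G A → v ∈ A


lemma mem_nbhd {G : SimpleGraph V} [DecidableRel G.Adj] {X : Finset V} {v : V} :
    v ∈ nbhd G X ↔ ∃ x ∈ X, G.Adj v x := by simp [nbhd]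

lemma crit_hall (G : SimpleGraph V) [DecidableRel G.Adj] {A : Finset V}
    (hA : IsCritIndep G A) {B : Finset V} (hB : B ⊆ nbhd G A) :
    B.card ≤ (nbhd G B ∩ A).card := by
  set A' : Finset V := A \ nbhd G B with hA'
  have hindep : IsIndep G A' := fun u hu w hw =>
    hA.1 u (Finset.mem_sdiff.mp hu).1 w (Finset.mem_sdiff.mp hw).1
  have h1 : diff G A' ≤ diff G A := hA.2 A' hindep
  have hAeq : A' = A \ (nbhd G B ∩ A) := by
    ext x
    simp only [hA', Finset.mem_sdiff, Finset.mem_inter]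
    tauto
  have hcard : A'.card = A.card - (nbhd G B ∩ A).card := by
    rw [hAeq, Finset.card_sdiff_of_subset Finset.inter_subset_right]
  have hsub : nbhd G A' ⊆ nbhd G A \ B := by
    intro u hu
    rcases mem_nbhd.mp hu with ⟨x, hx, hadj⟩
    rcases Finset.mem_sdiff.mp hx with ⟨hxA, hxN⟩
    refine Finset.mem_sdiff.mpr ⟨mem_nbhd.mpr ⟨x, hxA, hadj⟩, fun huB => hxN ?_⟩
    exact mem_nbhd.mpr ⟨u, huB, hadj.symm⟩
  have h2 : (nbhd G A').card ≤ (nbhd G A).card - B.card := by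
    calc (nbhd G A').card ≤ (nbhd G A \ B).card := Finset.card_le_card hsub
      _ = (nbhd G A).card - B.card := Finset.card_sdiff_of_subset hB
  have h3 : (nbhd G B ∩ A).card ≤ A.card := Finset.card_le_card Finset.inter_subset_right
  have h4 : B.card ≤ (nbhd G A).card := Finset.card_le_card hB
  unfold diff at h1
  omega

theorem no_tight_set_iff_matching_avoiding_each_vertex (G : SimpleGraph V)
    [DecidableRel G.Adj] (A : Finset V) (hA : IsCritIndep G A) :
    (¬ ∃ B : Finset V, B ⊆ nbhd G A ∧ B.Nonempty ∧ (nbhd G B ∩ A).card = B.card) ↔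
      ∀ v ∈ A, ∃ f : V → V, Set.InjOn f ↑(nbhd G A) ∧
        ∀ u ∈ nbhd G A, f u ∈ A \ {v} ∧ G.Adj u (f u) := by
  constructor
  · intro h v hv
    set t : {x // x ∈ nbhd G A} → Finset V :=
      fun u => (A \ {v}).filter (fun w => G.Adj u.val w) with ht
    have hall : ∀ s : Finset {x // x ∈ nbhd G A}, s.card ≤ (s.biUnion t).card := by
      intro s
      set B : Finset V := s.image Subtype.val with hBdef
      have hBsub : B ⊆ nbhd G A := by
        intro x hx
        rcases Finset.mem_image.mp hx with ⟨u, _, rfl⟩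
        exact u.2
      have hBcard : B.card = s.card :=
        Finset.card_image_of_injective _ Subtype.val_injective
      rcases Finset.eq_empty_or_nonempty s with rfl | hsne
      · simp
      have hBne : B.Nonempty := hsne.image _
      have hge : B.card ≤ (nbhd G B ∩ A).card := crit_hall G hA hBsub
      have hne : (nbhd G B ∩ A).card ≠ B.card := fun heq => h ⟨B, hBsub, hBne, heq⟩
      have hstrict : B.card + 1 ≤ (nbhd G B ∩ A).card := by omega
      have hsubset : (nbhd G B ∩ A) \ {v} ⊆ s.biUnion t := by
        intro w hw
        rcases Finset.mem_sdiff.mp hw with ⟨hw1, hwv⟩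
        rcases Finset.mem_inter.mp hw1 with ⟨hwN, hwA⟩
        rcases mem_nbhd.mp hwN with ⟨x, hxB, hadj⟩
        rcases Finset.mem_image.mp hxB with ⟨u, hus, rfl⟩
        refine Finset.mem_biUnion.mpr ⟨u, hus, ?_⟩
        simp only [ht, Finset.mem_filter, Finset.mem_sdiff, Finset.mem_singleton]
        exact ⟨⟨hwA, by simpa using hwv⟩, hadj.symm⟩
      have hcardminus : (nbhd G B ∩ A).card ≤ ((nbhd G B ∩ A) \ {v}).card + 1 := by
        have : (nbhd G B ∩ A) ⊆ ((nbhd G B ∩ A) \ {v}) ∪ {v} := by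
          intro x hx
          by_cases hxv : x = v
          · simp [hxv]
          · exact Finset.mem_union_left _ (Finset.mem_sdiff.mpr ⟨hx, by simpa using hxv⟩)
        calc (nbhd G B ∩ A).card ≤ (((nbhd G B ∩ A) \ {v}) ∪ {v}).card :=
              Finset.card_le_card this
          _ ≤ ((nbhd G B ∩ A) \ {v}).card + 1 := by
              simpa using Finset.card_union_le ((nbhd G B ∩ A) \ {v}) ({v} : Finset V)
      have := Finset.card_le_card hsubset
      omega
    obtain ⟨f, hfinj, hft⟩ := (Finset.all_card_le_biUnion_card_iff_exists_injective t).mp hall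
    refine ⟨fun u => if hu : u ∈ nbhd G A then f ⟨u, hu⟩ else u, ?_, ?_⟩
    · intro a ha b hb hab
      simp only [Finset.coe_mem, Finset.mem_coe] at ha hb
      simp only [dif_pos ha, dif_pos hb] at hab
      exact congrArg Subtype.val (hfinj hab)
    · intro u hu
      simp only [dif_pos hu]
      have := hft ⟨u, hu⟩
      simp only [ht, Finset.mem_filter] at this
      exact this
  · rintro hm ⟨B, hBsub, hBne, hBeq⟩
    obtain ⟨b, hbB⟩ := hBne
    obtain ⟨a, haA, hadj⟩ := mem_nbhd.mp (hBsub hbB)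
    have haN : a ∈ nbhd G B ∩ A :=
      Finset.mem_inter.mpr ⟨mem_nbhd.mpr ⟨b, hbB, hadj.symm⟩, haA⟩
    obtain ⟨f, hfinj, hf⟩ := hm a haA
    have himg : B.image f ⊆ (nbhd G B ∩ A) \ {a} := by
      intro x hx
      rcases Finset.mem_image.mp hx with ⟨u, huB, rfl⟩
      obtain ⟨hfu, hadju⟩ := hf u (hBsub huB)
      rcases Finset.mem_sdiff.mp hfu with ⟨hfuA, hfua⟩
      exact Finset.mem_sdiff.mpr
        ⟨Finset.mem_inter.mpr ⟨mem_nbhd.mpr ⟨u, huB, hadju.symm⟩, hfuA⟩, hfua⟩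
    have hic : (B.image f).card = B.card :=
      Finset.card_image_of_injOn (hfinj.mono (by exact_mod_cast hBsub))
    have hlt : ((nbhd G B ∩ A) \ {a}).card < (nbhd G B ∩ A).card :=
      Finset.card_lt_card ⟨Finset.sdiff_subset, fun hss =>
        by simpa using Finset.mem_sdiff.mp (hss haN)⟩
    have := Finset.card_le_card himg
    omega

end CritGraph
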